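/- For real diagonal matrices: if λ, μ ∈ ℝⁿ and U ∈ U(n), then tr(D(λ)* U D(μ) U* + (U D(μ) U*)* D(λ)) is a convex combination ∑ αᵢ (λᵀPᵢμ + (Pᵢμ)ᵀλ) over permutation matrices Pᵢ, and consequently ‖D(λ) - U D(μ) U*‖² ≥ min over permutations σ of ‖λ - σ(μ)‖². -/

import Mathlib

open Matrix Finset

lemma mulStarSelf (z : ℂ) : z * star z = ((‖z‖^2 : ℝ) : ℂ) := by
  simp [Complex.star_def, Complex.mul_conj, Complex.normSq_eq_norm_sq]

lemma starMulSelf (z : ℂ) : star z * z = ((‖z‖^2 : ℝ) : ℂ) := by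
  rw [mul_comm]; exact mulStarSelf z

lemma S_mem (n : ℕ) (U : Matrix (Fin n) (Fin n) ℂ) (hU : U ∈ Matrix.unitaryGroup (Fin n) ℂ) :
    (Matrix.of fun i j => ‖U i j‖^2) ∈ doublyStochastic ℝ (Fin n) := by
  have h1 : star U * U = 1 := hU.1
  have h2 : U * star U = 1 := hU.2
  rw [mem_doublyStochastic_iff_sum]
  refine ⟨fun i j => by simp only [of_apply]; positivity, fun i => ?_, fun j => ?_⟩
  · have h := congrFun (congrFun h2 i) i
    simp only [mul_apply, one_apply_eq, star_apply, mulStarSelf] at h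
    rw [← Complex.ofReal_sum] at h
    exact_mod_cast h
  · have h := congrFun (congrFun h1 j) j
    simp only [mul_apply, one_apply_eq, star_apply, starMulSelf] at h
    rw [← Complex.ofReal_sum] at h
    exact_mod_cast h

theorem trace_convex_combination_and_eigenvalue_bound (n : ℕ)
    (lam mu : Fin n → ℝ) (U : Matrix (Fin n) (Fin n) ℂ)
    (hU : U ∈ Matrix.unitaryGroup (Fin n) ℂ) :
    (∃ α : Equiv.Perm (Fin n) → ℝ, (∀ σ, 0 ≤ α σ) ∧ (∑ σ, α σ) = 1 ∧
      Matrix.trace ((Matrix.diagonal fun i => (lam i : ℂ))ᴴ *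
            (U * (Matrix.diagonal fun i => (mu i : ℂ)) * star U) +
          (U * (Matrix.diagonal fun i => (mu i : ℂ)) * star U)ᴴ *
            (Matrix.diagonal fun i => (lam i : ℂ))) =
        ((∑ σ : Equiv.Perm (Fin n), α σ *
            ((∑ i, lam i * mu (σ i)) + (∑ i, mu (σ i) * lam i)) : ℝ) : ℂ)) ∧
    (∃ σ : Equiv.Perm (Fin n),
      (∑ i, (lam i - mu (σ i)) ^ 2) ≤
        ∑ i, ∑ j, ‖((Matrix.diagonal fun i => (lam i : ℂ)) -
            U * (Matrix.diagonal fun i => (mu i : ℂ)) * star U) i j‖ ^ 2) := by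
  have h1 : star U * U = 1 := hU.1
  have h1' : Uᴴ * U = 1 := hU.1
  set Dl : Matrix (Fin n) (Fin n) ℂ := Matrix.diagonal fun i => (lam i : ℂ) with hDl
  set Dm : Matrix (Fin n) (Fin n) ℂ := Matrix.diagonal fun i => (mu i : ℂ) with hDm
  set A : Matrix (Fin n) (Fin n) ℂ := U * Dm * star U with hA
  set S : Matrix (Fin n) (Fin n) ℝ := Matrix.of fun i j => ‖U i j‖^2 with hS
  have hAii : ∀ i, A i i = ((∑ j, S i j * mu j : ℝ) : ℂ) := by
    intro i
    rw [hA, mul_apply, Complex.ofReal_sum]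
    refine Finset.sum_congr rfl fun k _ => ?_
    rw [mul_diagonal, star_apply, mul_comm (U i k) _, mul_assoc, mulStarSelf]
    simp only [hS, of_apply]
    push_cast; ring
  have hDlH : Dlᴴ = Dl := by
    rw [hDl, diagonal_conjTranspose]
    have : (star fun i => ((lam i : ℂ))) = fun i => ((lam i : ℂ)) :=
      funext fun i => Complex.conj_ofReal _
    rw [this]
  have hDmH : Dmᴴ = Dm := by
    rw [hDm, diagonal_conjTranspose]
    have : (star fun i => ((mu i : ℂ))) = fun i => ((mu i : ℂ)) :=
      funext fun i => Complex.conj_ofReal _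
    rw [this]
  have hAH : Aᴴ = A := by
    rw [hA, star_eq_conjTranspose]
    simp only [conjTranspose_mul, conjTranspose_conjTranspose, hDmH, Matrix.mul_assoc]
  obtain ⟨α, hα0, hα1, hαS⟩ := exists_eq_sum_perm_of_mem_doublyStochastic (S_mem n U hU)
  have hαS' : ∑ σ : Equiv.Perm (Fin n), α σ • σ.permMatrix ℝ = S := hαS
  set t : ℝ := ∑ i, lam i * ∑ j, S i j * mu j with ht
  have htr : Matrix.trace (Dlᴴ * A + Aᴴ * Dl) = ((2 * t : ℝ) : ℂ) := by
    rw [trace_add, hDlH, hAH, Matrix.trace, Matrix.trace]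
    simp only [diag_apply, hDl, diagonal_mul, mul_diagonal, hAii]
    rw [ht, ← Finset.sum_add_distrib]
    push_cast
    rw [Finset.mul_sum]
    refine Finset.sum_congr rfl fun i _ => ?_
    ring
  have hSe : ∀ i j, S i j = ∑ σ : Equiv.Perm (Fin n), α σ * (σ.permMatrix ℝ) i j := by
    intro i j
    rw [← hαS']
    simp only [Matrix.sum_apply, Matrix.smul_apply, smul_eq_mul]
  have hPsum : ∀ (σ : Equiv.Perm (Fin n)) i, ∑ j, (σ.permMatrix ℝ) i j * mu j = mu (σ i) := by
    intro σ i
    simp [Equiv.Perm.permMatrix, PEquiv.toMatrix_apply, Equiv.toPEquiv_apply, ite_mul]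
  have ht_perm : t = ∑ σ : Equiv.Perm (Fin n), α σ * ∑ i, lam i * mu (σ i) := by
    calc t = ∑ i, ∑ j, lam i * (S i j * mu j) := by
          rw [ht]
          exact Finset.sum_congr rfl fun i _ => by
            rw [Finset.mul_sum]
      _ = ∑ i, ∑ j, ∑ σ : Equiv.Perm (Fin n), α σ * (lam i * ((σ.permMatrix ℝ) i j * mu j)) := by
          refine Finset.sum_congr rfl fun i _ => Finset.sum_congr rfl fun j _ => ?_
          rw [hSe i j, Finset.sum_mul, Finset.mul_sum]
          refine Finset.sum_congr rfl fun σ _ => by ring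
      _ = ∑ i, ∑ σ : Equiv.Perm (Fin n), ∑ j, α σ * (lam i * ((σ.permMatrix ℝ) i j * mu j)) :=
          Finset.sum_congr rfl fun i _ => Finset.sum_comm
      _ = ∑ σ : Equiv.Perm (Fin n), ∑ i, ∑ j, α σ * (lam i * ((σ.permMatrix ℝ) i j * mu j)) :=
          Finset.sum_comm
      _ = ∑ σ : Equiv.Perm (Fin n), α σ * ∑ i, lam i * mu (σ i) := by
          refine Finset.sum_congr rfl fun σ _ => ?_
          rw [Finset.mul_sum]
          refine Finset.sum_congr rfl fun i _ => ?_
          rw [← hPsum σ i, Finset.mul_sum, Finset.mul_sum]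
  constructor
  · refine ⟨α, hα0, hα1, ?_⟩
    rw [htr]
    norm_cast
    rw [ht_perm, Finset.mul_sum]
    refine Finset.sum_congr rfl fun σ _ => ?_
    have h : (∑ i, mu (σ i) * lam i) = ∑ i, lam i * mu (σ i) :=
      Finset.sum_congr rfl fun i _ => mul_comm _ _
    rw [h]; ring
  · obtain ⟨σ₀, -, hσ₀⟩ := Finset.exists_max_image Finset.univ
      (fun σ : Equiv.Perm (Fin n) => ∑ i, lam i * mu (σ i)) ⟨1, Finset.mem_univ 1⟩
    refine ⟨σ₀, ?_⟩
    have htle : t ≤ ∑ i, lam i * mu (σ₀ i) := by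
      rw [ht_perm]
      calc ∑ σ : Equiv.Perm (Fin n), α σ * ∑ i, lam i * mu (σ i)
          ≤ ∑ σ : Equiv.Perm (Fin n), α σ * ∑ i, lam i * mu (σ₀ i) :=
            Finset.sum_le_sum fun σ _ =>
              mul_le_mul_of_nonneg_left (hσ₀ σ (Finset.mem_univ σ)) (hα0 σ)
        _ = ∑ i, lam i * mu (σ₀ i) := by rw [← Finset.sum_mul, hα1, one_mul]
    have htrAA : Matrix.trace (Aᴴ * A) = ((∑ i, mu i ^ 2 : ℝ) : ℂ) := by
      have key : Aᴴ * A = U * (Dm * (Dm * Uᴴ)) := by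
        rw [hAH, hA, star_eq_conjTranspose]
        simp only [Matrix.mul_assoc]
        rw [← Matrix.mul_assoc Uᴴ U, h1', Matrix.one_mul]
      rw [key, trace_mul_comm, Matrix.mul_assoc, Matrix.mul_assoc, h1', Matrix.mul_one,
        hDm, diagonal_mul_diagonal, trace_diagonal]
      push_cast
      refine Finset.sum_congr rfl fun i _ => by ring
    have htrLL : Matrix.trace (Dlᴴ * Dl) = ((∑ i, lam i ^ 2 : ℝ) : ℂ) := by
      rw [hDlH, hDl, diagonal_mul_diagonal, trace_diagonal]
      push_cast
      refine Finset.sum_congr rfl fun i _ => by ring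
    have hF : Matrix.trace ((Dl - A)ᴴ * (Dl - A))
        = ((∑ i, ∑ j, ‖(Dl - A) i j‖ ^ 2 : ℝ) : ℂ) := by
      rw [Matrix.trace]
      calc ∑ j, ((Dl - A)ᴴ * (Dl - A)).diag j
          = ∑ j, ∑ i, ((‖(Dl - A) i j‖^2 : ℝ) : ℂ) := by
            refine Finset.sum_congr rfl fun j _ => ?_
            rw [diag_apply, mul_apply]
            refine Finset.sum_congr rfl fun i _ => ?_
            rw [conjTranspose_apply, starMulSelf]
        _ = ((∑ i, ∑ j, ‖(Dl - A) i j‖ ^ 2 : ℝ) : ℂ) := by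
            push_cast
            rw [Finset.sum_comm]
    have hexp : Matrix.trace ((Dl - A)ᴴ * (Dl - A))
        = Matrix.trace (Dlᴴ * Dl) + Matrix.trace (Aᴴ * A)
          - Matrix.trace (Dlᴴ * A + Aᴴ * Dl) := by
      rw [conjTranspose_sub, Matrix.sub_mul, Matrix.mul_sub, Matrix.mul_sub,
        trace_sub, trace_sub, trace_sub, trace_add]
      ring
    have hreal : (∑ i, ∑ j, ‖(Dl - A) i j‖ ^ 2 : ℝ)
        = (∑ i, lam i ^ 2) + (∑ i, mu i ^ 2) - 2 * t := by
      have h3 : Matrix.trace (Dlᴴ * Dl) + Matrix.trace (Aᴴ * A)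
          - Matrix.trace (Dlᴴ * A + Aᴴ * Dl)
          = (((∑ i, lam i ^ 2) + (∑ i, mu i ^ 2) - 2 * t : ℝ) : ℂ) := by
        rw [htrLL, htrAA, htr]
        push_cast
        ring
      have h2 := hF.symm.trans (hexp.trans h3)
      exact_mod_cast h2
    rw [hreal]
    have hmusq : ∑ i, mu (σ₀ i) ^ 2 = ∑ i, mu i ^ 2 :=
      Equiv.sum_comp σ₀ (fun i => mu i ^ 2)
    have hkey : ∑ i, (lam i - mu (σ₀ i)) ^ 2
        = (∑ i, lam i ^ 2) + (∑ i, mu i ^ 2) - 2 * ∑ i, lam i * mu (σ₀ i) := by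
      rw [← hmusq, Finset.mul_sum, ← Finset.sum_add_distrib, ← Finset.sum_sub_distrib]
      exact Finset.sum_congr rfl fun i _ => by ring
    rw [hkey]
    linarith
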